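/- Given a probability distribution over slopes with total buying cost B, the 'prudent' redistribution that places all mass on the two consecutive slopes best and next (where b_best ≤ B ≤ b_next, next = best or best+1) with weights (b_next − B)/(b_next − b_best) on best and (B − b_best)/(b_next − b_best) on next, is a probability distribution with the same expected buying cost B, and its expected rental rate is at most that of the original distribution. -/

import Mathlib

/-- The prudent two-point redistribution with the same mean buying budget `B`
is a probability distribution and its expected rental rate is minimal. -/
theorem prudent_redistribution_optimal (k : ℕ) (b r : ℕ → ℝ)
    (hb : ∀ i < k, b i < b (i + 1)) (hr : ∀ i < k, r (i + 1) < r i)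
    (hconc : ∀ i j l, i < j → j < l → l ≤ k →
      (r j - r l) / (b l - b j) < (r i - r j) / (b j - b i))
    (p : ℕ → ℝ) (hp0 : ∀ i ≤ k, 0 ≤ p i) (hp1 : ∑ i ∈ Finset.range (k + 1), p i = 1)
    (B : ℝ) (hB : ∑ i ∈ Finset.range (k + 1), p i * b i = B)
    (best next : ℕ) (hbk : best ≤ k) (hnk : next ≤ k)
    (hbn : next = best ∨ next = best + 1)
    (hbB : b best ≤ B) (hBn : B ≤ b next)
    (q : ℕ → ℝ)
    (hq : ∀ i, q i =
      if best = next then (if i = best then 1 else 0)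
      else if i = best then (b next - B) / (b next - b best)
      else if i = next then (B - b best) / (b next - b best)
      else 0) :
    (∀ i ≤ k, 0 ≤ q i) ∧
      (∑ i ∈ Finset.range (k + 1), q i = 1) ∧
      (∑ i ∈ Finset.range (k + 1), q i * b i = B) ∧
      (∑ i ∈ Finset.range (k + 1), q i * r i ≤ ∑ i ∈ Finset.range (k + 1), p i * r i) := by
  have bmono : ∀ j, j ≤ k → ∀ i, i < j → b i < b j := by
    intro j
    induction j with
    | zero => intro _ i hi; omega
    | succ n ih =>
      intro hj i hi
      rcases Nat.lt_succ_iff_lt_or_eq.mp hi with h | h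
      · exact lt_trans (ih (by omega) i h) (hb n (by omega))
      · subst h; exact hb i (by omega)
  have chord : ∀ j, j < k → ∀ i, i ≤ k →
      r j + (r (j+1) - r j)/(b (j+1) - b j) * (b i - b j) ≤ r i := by
    intro j hj i hi
    have hd : (0:ℝ) < b (j+1) - b j := sub_pos.mpr (hb j hj)
    rcases lt_trichotomy i j with h | h | h
    · have he : (0:ℝ) < b j - b i := sub_pos.mpr (bmono j (by omega) i h)
      have hc := hconc i j (j+1) h (by omega) (by omega)
      rw [div_lt_div_iff₀ hd he] at hc
      have h2 : (r (j+1) - r j) * (b i - b j) / (b (j+1) - b j) ≤ r i - r j := by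
        rw [div_le_iff₀ hd]; nlinarith [hc]
      rw [div_mul_eq_mul_div]
      linarith
    · subst h; simp
    · rcases Nat.lt_or_ge i (j+2) with h' | h'
      · have hij : i = j+1 := by omega
        subst hij
        rw [div_mul_cancel₀ _ (ne_of_gt hd)]
        linarith
      · have he : (0:ℝ) < b i - b (j+1) := sub_pos.mpr (bmono i hi (j+1) (by omega))
        have hc := hconc j (j+1) i (by omega) (by omega) hi
        rw [div_lt_div_iff₀ he hd] at hc
        have h2 : (r (j+1) - r j) * (b i - b j) / (b (j+1) - b j) ≤ r i - r j := by
          rw [div_le_iff₀ hd]; nlinarith [hc]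
        rw [div_mul_eq_mul_div]
        linarith
  have key : ∀ c m : ℝ, (∀ i ≤ k, c + m * b i ≤ r i) →
      c + m * B ≤ ∑ i ∈ Finset.range (k+1), p i * r i := by
    intro c m h
    have h1 : ∑ i ∈ Finset.range (k+1), p i * (c + m * b i)
        ≤ ∑ i ∈ Finset.range (k+1), p i * r i := by
      apply Finset.sum_le_sum
      intro i hi
      have hik : i ≤ k := Nat.lt_succ_iff.mp (Finset.mem_range.mp hi)
      exact mul_le_mul_of_nonneg_left (h i hik) (hp0 i hik)
    have h2 : ∑ i ∈ Finset.range (k+1), p i * (c + m * b i) = c + m * B := by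
      have e : ∀ i, p i * (c + m * b i) = p i * c + m * (p i * b i) := fun i => by ring
      simp only [e]
      rw [Finset.sum_add_distrib, ← Finset.sum_mul, ← Finset.mul_sum, hp1, hB, one_mul]
    linarith
  have hbmem : best ∈ Finset.range (k+1) := Finset.mem_range.mpr (by omega)
  rcases hbn with heq | heq
  · -- next = best
    subst heq
    have hBeq : B = b next := le_antisymm hBn hbB
    subst hBeq
    have hsum0 : ∀ f : ℕ → ℝ, ∑ i ∈ Finset.range (k+1), q i * f i = f next := by
      intro f
      have e : ∀ i, q i * f i = if i = next then f next else 0 := by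
        intro i
        rw [hq i, if_pos rfl]
        by_cases h1 : i = next
        · subst h1; simp
        · simp [h1]
      rw [Finset.sum_congr rfl (fun i _ => e i), Finset.sum_ite_eq' _ next, if_pos hbmem]
    refine ⟨?_, ?_, ?_, ?_⟩
    · intro i hi; rw [hq i, if_pos rfl]; split_ifs <;> norm_num
    · have h1 := hsum0 (fun _ => 1)
      simpa using h1
    · exact hsum0 b
    · rw [hsum0 r]
      rcases Nat.eq_zero_or_pos k with hk0 | hk0
      · subst hk0
        have hb0 : next = 0 := by omega
        subst hb0
        simp only [zero_add, Finset.sum_range_one] at hp1 ⊢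
        rw [hp1, one_mul]
      · by_cases hbl : next < k
        · have hkey := key (r next - (r (next+1) - r next)/(b (next+1) - b next) * b next)
              ((r (next+1) - r next)/(b (next+1) - b next))
              (fun i hi => by have h3 := chord next hbl i hi; rw [mul_sub] at h3; linarith)
          linarith
        · obtain ⟨k', rfl⟩ := Nat.exists_eq_succ_of_ne_zero (by omega : k ≠ 0)
          have hnext : next = k' + 1 := by omega
          subst hnext
          have hd : (0:ℝ) < b (k'+1) - b k' := sub_pos.mpr (hb k' (by omega))
          have hkey := key (r k' - (r (k'+1) - r k')/(b (k'+1) - b k') * b k')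
              ((r (k'+1) - r k')/(b (k'+1) - b k'))
              (fun i hi => by have h3 := chord k' (by omega) i hi; rw [mul_sub] at h3; linarith)
          have hcan : (r (k'+1) - r k')/(b (k'+1) - b k') * (b (k'+1) - b k')
              = r (k'+1) - r k' := div_mul_cancel₀ _ (ne_of_gt hd)
          rw [mul_sub] at hcan
          linarith
  · -- next = best + 1
    subst heq
    have hblt : best < k := by omega
    have hd : (0:ℝ) < b (best+1) - b best := sub_pos.mpr (hb best hblt)
    have hne : ¬ best = best + 1 := by omega
    have hnmem : best + 1 ∈ Finset.range (k+1) := Finset.mem_range.mpr (by omega)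
    have hsum : ∀ f : ℕ → ℝ, ∑ i ∈ Finset.range (k+1), q i * f i =
        (b (best+1) - B)/(b (best+1) - b best) * f best +
        (B - b best)/(b (best+1) - b best) * f (best+1) := by
      intro f
      have e : ∀ i, q i * f i =
          (if i = best then (b (best+1) - B)/(b (best+1) - b best) * f best else 0) +
          (if i = best+1 then (B - b best)/(b (best+1) - b best) * f (best+1) else 0) := by
        intro i
        rw [hq i, if_neg hne]
        by_cases h1 : i = best
        · subst h1; simp [hne]
        · by_cases h2 : i = best+1
          · subst h2; simp [show ¬ (best+1 = best) by omega]
          · simp [h1, h2]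
      rw [Finset.sum_congr rfl (fun i _ => e i), Finset.sum_add_distrib,
          Finset.sum_ite_eq' _ best, Finset.sum_ite_eq' _ (best+1), if_pos hbmem, if_pos hnmem]
    refine ⟨?_, ?_, ?_, ?_⟩
    · intro i hi
      rw [hq i, if_neg hne]
      split_ifs
      · exact div_nonneg (by linarith) hd.le
      · exact div_nonneg (by linarith) hd.le
      · exact le_refl 0
    · have h1 := hsum (fun _ => 1)
      simp only [mul_one] at h1
      rw [h1, ← add_div, div_eq_one_iff_eq (ne_of_gt hd)]
      ring
    · rw [hsum b, div_mul_eq_mul_div, div_mul_eq_mul_div, ← add_div,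
        div_eq_iff (ne_of_gt hd)]
      ring
    · rw [hsum r]
      have hkey := key (r best - (r (best+1) - r best)/(b (best+1) - b best) * b best)
          ((r (best+1) - r best)/(b (best+1) - b best))
          (fun i hi => by have h3 := chord best hblt i hi; rw [mul_sub] at h3; linarith)
      have heq2 : (b (best+1) - B)/(b (best+1) - b best) * r best +
          (B - b best)/(b (best+1) - b best) * r (best+1) =
          (r best - (r (best+1) - r best)/(b (best+1) - b best) * b best) +
          (r (best+1) - r best)/(b (best+1) - b best) * B := by
        field_simp
        ring
      linarith
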